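/- Let Λ be a finite simple graph with vertices v_1, …, v_n and n ≥ 3, and let Γ(Λ) be the graph of the explicit construction. Then for every vertex v_i of Λ, the induced subgraph Γ(Λ) − st(v_i) has exactly two connected components, one of which has vertex set {a_1, a_2}. -/

import Mathlib

open SimpleGraph
open scoped commutatorElement

/-- The set of commutator relations defining the right-angled Artin group of a graph. -/
def raagRels {V : Type} (G : SimpleGraph V) : Set (FreeGroup V) :=
  {r | ∃ v w : V, G.Adj v w ∧ r = ⁅FreeGroup.of v, FreeGroup.of w⁆}

/-- The right-angled Artin group of a graph `G`. -/
abbrev RAAG {V : Type} (G : SimpleGraph V) : Type := PresentedGroup (raagRels G)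

/-- The subgroup of inner automorphisms of a group. -/
def Inn (G : Type*) [Group G] : Subgroup (MulAut G) := (MulAut.conj (G := G)).range

instance Inn.normal (G : Type*) [Group G] : (Inn G).Normal := by
  constructor
  intro x hx φ
  obtain ⟨g, rfl⟩ := hx
  refine ⟨φ g, ?_⟩
  ext h
  simp [MulAut.conj, mul_assoc]

/-- The outer automorphism group of a group. -/
abbrev Out (G : Type*) [Group G] : Type _ := MulAut G ⧸ Inn G

/-- The group of pure symmetric automorphisms of the right-angled Artin group of `G`:
those automorphisms sending each generator to a conjugate of itself. -/
def PSA {V : Type} (G : SimpleGraph V) : Subgroup (MulAut (RAAG G)) where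
  carrier := {φ | ∀ v : V,
    IsConj (PresentedGroup.of (rels := raagRels G) v) (φ (PresentedGroup.of v))}
  one_mem' := fun _ => IsConj.refl _
  mul_mem' := by
    intro φ ψ hφ hψ v
    rw [MulAut.mul_apply]
    exact (hφ v).trans (φ.toMonoidHom.map_isConj (hψ v))
  inv_mem' := by
    intro φ hφ v
    have h := (φ⁻¹ : MulAut (RAAG G)).toMonoidHom.map_isConj (hφ v)
    simp only [MulEquiv.coe_toMonoidHom] at h
    have h2 : (φ⁻¹ : MulAut (RAAG G)) (φ (PresentedGroup.of v)) = PresentedGroup.of v := by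
      simp
    rw [h2] at h
    exact h.symm

/-- The group of pure symmetric outer automorphisms: the image of `PSA` in `Out`. -/
def PSO {V : Type} (G : SimpleGraph V) : Subgroup (Out (RAAG G)) :=
  (PSA G).map (QuotientGroup.mk' (Inn (RAAG G)))

/-- The star of a vertex: the vertex together with its neighbours. -/
def graphStar {V : Type} (G : SimpleGraph V) (v : V) : Set V := insert v (G.neighborSet v)

/-- `IsCompOf G s A` says that `A` is the vertex set of a connected component of the
induced subgraph of `G` on `s`. -/
def IsCompOf {V : Type} (G : SimpleGraph V) (s : Set V) (A : Set V) : Prop :=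
  ∃ a : s, A = {x : V | ∃ hx : x ∈ s, (SimpleGraph.induce s G).Reachable ⟨x, hx⟩ a}

/-- The support graph of `G` at a vertex `v`: vertices are the connected components of
`G - st(v)`, and two distinct components `A`, `B` are adjacent if there is `b ∈ B` such
that `A` is also a connected component of `G - st(b)`, or symmetrically. -/
def SupportGraph {V : Type} (G : SimpleGraph V) (v : V) :
    SimpleGraph {A : Set V // IsCompOf G (graphStar G v)ᶜ A} :=
  SimpleGraph.fromRel (fun A B => ∃ b ∈ B.1, IsCompOf G (graphStar G b)ᶜ A.1)

/-- A pair of distinct non-adjacent vertices `(v, w)` is a separating intersection of links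
if `G - (lk(v) ∩ lk(w))` has a connected component containing neither `v` nor `w`. -/
def SILPair {V : Type} (G : SimpleGraph V) (v w : V) : Prop :=
  v ≠ w ∧ ¬ G.Adj v w ∧
    ∃ A : Set V, IsCompOf G (G.neighborSet v ∩ G.neighborSet w)ᶜ A ∧ v ∉ A ∧ w ∉ A
/-- Vertices of the graph `Γ(Λ)`: the vertices of `Λ` (indexed by `Fin n`, with `v i`
denoting `v_{i+1}`) together with new vertices `a₁, a₂, b₁, b₂, c₁, …, c_n, d₁, d₂`. -/
inductive GV (n : ℕ) : Type where
  | v (i : Fin n)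
  | a1 | a2 | b1 | b2
  | c (i : Fin n)
  | d1 | d2
deriving DecidableEq

/-- The edge relation of the graph `Γ(Λ)` (to be symmetrized by `SimpleGraph.fromRel`). -/
def gammaRel {n : ℕ} (Λ : SimpleGraph (Fin n)) : GV n → GV n → Prop
  | .v i, .v j => Λ.Adj i j
  | .c i, .v j => j = i ∨ (j : ℕ) = ((i : ℕ) + 1) % n
  | .c _, .d1 => True
  | .c _, .d2 => True
  | .d1, .v j => (j : ℕ) = 0
  | .d1, .b1 => True
  | .d2, .v j => (j : ℕ) ≠ 0
  | .d2, .b2 => True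
  | .v _, .b1 => True
  | .v _, .b2 => True
  | .b1, .a1 => True
  | .b2, .a2 => True
  | .a1, .a2 => True
  | _, _ => False

/-- The graph `Γ(Λ)` of the explicit construction. -/
def GammaGraph {n : ℕ} (Λ : SimpleGraph (Fin n)) : SimpleGraph (GV n) :=
  SimpleGraph.fromRel (gammaRel Λ)

/-- Vertices of the graph `Γ'(Λ)`: the vertices of `Λ` (indexed by `Fin n`, with `v i`
denoting `v_{i+1}`) together with new vertices
`a₁, a₂, a₃, b₁, b₂, b₃, c₁, …, c_n, d₁, d₂, d₃`. -/
inductive GV' (n : ℕ) : Type where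
  | v (i : Fin n)
  | a1 | a2 | a3 | b1 | b2 | b3
  | c (i : Fin n)
  | d1 | d2 | d3
deriving DecidableEq

/-- The edge relation of the graph `Γ'(Λ)` (to be symmetrized by `SimpleGraph.fromRel`). -/
def gammaRel' {n : ℕ} (Λ : SimpleGraph (Fin n)) : GV' n → GV' n → Prop
  | .v i, .v j => Λ.Adj i j
  | .c i, .v j => j = i ∨ (j : ℕ) = ((i : ℕ) + 1) % n
  | .c _, .d1 => True
  | .c _, .d2 => True
  | .c _, .d3 => True
  | .d1, .v j => (j : ℕ) = 0
  | .d1, .b1 => True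
  | .d2, .v j => (j : ℕ) = 1
  | .d3, .v j => 2 ≤ (j : ℕ)
  | .d3, .b3 => True
  | .d2, .d3 => True
  | .v _, .b1 => True
  | .v _, .b2 => True
  | .v _, .b3 => True
  | .b1, .a1 => True
  | .b2, .a2 => True
  | .b3, .a3 => True
  | .a1, .a2 => True
  | .a1, .a3 => True
  | .a2, .a3 => True
  | _, _ => False

/-- The graph `Γ'(Λ)` of the second explicit construction. -/
def GammaGraph' {n : ℕ} (Λ : SimpleGraph (Fin n)) : SimpleGraph (GV' n) :=
  SimpleGraph.fromRel (gammaRel' Λ)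


private lemma reachP_ind {V : Type} {H : SimpleGraph V} (P : V → Prop)
    (hP : ∀ a b, H.Adj a b → P a → P b) {u v : V} (h : H.Reachable u v) : P u → P v := by
  obtain ⟨w⟩ := h
  induction w with
  | nil => exact id
  | cons h' p ih => exact fun hu => ih (hP _ _ h' hu)

private lemma compSet_eq {V : Type} {G : SimpleGraph V} {s : Set V} {a b : ↥s}
    (h : (SimpleGraph.induce s G).Reachable a b) :
    {x : V | ∃ hx : x ∈ s, (SimpleGraph.induce s G).Reachable ⟨x, hx⟩ a}
      = {x : V | ∃ hx : x ∈ s, (SimpleGraph.induce s G).Reachable ⟨x, hx⟩ b} := by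
  ext x
  constructor
  · rintro ⟨hx, hr⟩; exact ⟨hx, hr.trans h⟩
  · rintro ⟨hx, hr⟩; exact ⟨hx, hr.trans h.symm⟩

private lemma assemble {V : Type} {G : SimpleGraph V} {s : Set V} {p q h : V}
    (hp : p ∈ s) (hq : q ∈ s) (hh : h ∈ s)
    (hpq : (SimpleGraph.induce s G).Adj ⟨p, hp⟩ ⟨q, hq⟩)
    (hclosed : ∀ x y : ↥s, (SimpleGraph.induce s G).Adj x y →
      (x.1 = p ∨ x.1 = q) → (y.1 = p ∨ y.1 = q))
    (hhp : h ≠ p) (hhq : h ≠ q)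
    (hconn : ∀ x (hx : x ∈ s), x ≠ p → x ≠ q →
      (SimpleGraph.induce s G).Reachable ⟨x, hx⟩ ⟨h, hh⟩) :
    ∃ A B : Set V, A ≠ B ∧ IsCompOf G s A ∧ IsCompOf G s B ∧ A = {p, q} ∧
      (∀ C : Set V, IsCompOf G s C → C = A ∨ C = B) := by
  refine ⟨{x : V | ∃ hx : x ∈ s, (SimpleGraph.induce s G).Reachable ⟨x, hx⟩ ⟨p, hp⟩},
    {x : V | ∃ hx : x ∈ s, (SimpleGraph.induce s G).Reachable ⟨x, hx⟩ ⟨h, hh⟩},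
    ?_, ⟨⟨p, hp⟩, rfl⟩, ⟨⟨h, hh⟩, rfl⟩, ?_, ?_⟩
  case refine_2 =>
    ext x
    constructor
    · rintro ⟨hx, hr⟩
      exact reachP_ind (fun z : ↥s => z.1 = p ∨ z.1 = q)
        (fun a b hab ha => hclosed a b hab ha) hr.symm (Or.inl rfl)
    · rintro (rfl | rfl)
      · exact ⟨hp, SimpleGraph.Reachable.refl _⟩
      · exact ⟨hq, hpq.symm.reachable⟩
  case refine_1 =>
    intro e
    have hhB : h ∈ {x : V | ∃ hx : x ∈ s,
        (SimpleGraph.induce s G).Reachable ⟨x, hx⟩ ⟨h, hh⟩} := ⟨hh, SimpleGraph.Reachable.refl _⟩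
    rw [← e] at hhB
    obtain ⟨hx, hr⟩ := hhB
    rcases reachP_ind (fun z : ↥s => z.1 = p ∨ z.1 = q)
        (fun a b hab ha => hclosed a b hab ha) hr.symm (Or.inl rfl) with h' | h'
    · exact hhp h'
    · exact hhq h'
  case refine_3 =>
    intro C hC
    obtain ⟨a, rfl⟩ := hC
    by_cases hap : a.1 = p ∨ a.1 = q
    · left
      have hr : (SimpleGraph.induce s G).Reachable a ⟨p, hp⟩ := by
        rcases hap with h1 | h1
        · have : a = ⟨p, hp⟩ := Subtype.ext h1
          rw [this]
        · have : a = ⟨q, hq⟩ := Subtype.ext h1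
          rw [this]
          exact hpq.symm.reachable
      exact compSet_eq hr
    · right
      push_neg at hap
      have hr := hconn a.1 a.2 hap.1 hap.2
      exact compSet_eq hr

/-- For every vertex `v_i` of `Λ`, the graph `Γ(Λ) - st(v_i)` has exactly
two connected components, one of which has vertex set `{a₁, a₂}`. -/
theorem gammaGraph_minus_star_two_components
    (n : ℕ) (hn : 3 ≤ n) (Λ : SimpleGraph (Fin n)) (i : Fin n) :
    ∃ A B : Set (GV n), A ≠ B ∧
      IsCompOf (GammaGraph Λ) (graphStar (GammaGraph Λ) (GV.v i))ᶜ A ∧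
      IsCompOf (GammaGraph Λ) (graphStar (GammaGraph Λ) (GV.v i))ᶜ B ∧
      A = {GV.a1, GV.a2} ∧
      (∀ C : Set (GV n),
        IsCompOf (GammaGraph Λ) (graphStar (GammaGraph Λ) (GV.v i))ᶜ C → C = A ∨ C = B) := by
  classical
  haveI : NeZero n := ⟨by omega⟩
  set G := GammaGraph Λ with hGdef
  set s := (graphStar G (GV.v i))ᶜ with hsdef
  have hadj : ∀ x y : GV n, G.Adj x y ↔ x ≠ y ∧ (gammaRel Λ x y ∨ gammaRel Λ y x) :=
    fun x y => SimpleGraph.fromRel_adj _ x y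
  have hmem : ∀ x : GV n, x ∈ s ↔ x ≠ GV.v i ∧ ¬ G.Adj (GV.v i) x := by
    intro x
    simp only [hsdef, graphStar, Set.mem_compl_iff, Set.mem_insert_iff,
      SimpleGraph.mem_neighborSet, not_or]
  have hval1 : ((1 : Fin n) : ℕ) = 1 := by
    rw [Fin.val_one']; exact Nat.mod_eq_of_lt (by omega)
  have hsucc : ∀ k : Fin n, ((k + 1 : Fin n) : ℕ) = ((k : ℕ) + 1) % n := by
    intro k; rw [Fin.add_def, hval1]
  have hCcond : ∀ j k : Fin n, ((j : ℕ) = ((k : ℕ) + 1) % n) ↔ j = k + 1 := by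
    intro j k
    rw [Fin.ext_iff, hsucc]
  have hind : ∀ (x y : GV n) (hx : x ∈ s) (hy : y ∈ s), G.Adj x y →
      (SimpleGraph.induce s G).Adj ⟨x, hx⟩ ⟨y, hy⟩ := by
    intro x y hx hy h
    exact h
  have ha1 : GV.a1 ∈ s := by
    rw [hmem]
    refine ⟨by simp, ?_⟩
    rw [hadj]
    rintro ⟨-, h | h⟩ <;> simp [gammaRel] at h
  have ha2 : GV.a2 ∈ s := by
    rw [hmem]
    refine ⟨by simp, ?_⟩
    rw [hadj]
    rintro ⟨-, h | h⟩ <;> simp [gammaRel] at h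
  have hb1 : GV.b1 ∉ s := by
    rw [hmem]
    rintro ⟨-, h⟩
    exact h ((hadj _ _).2 ⟨by simp, Or.inl trivial⟩)
  have hb2 : GV.b2 ∉ s := by
    rw [hmem]
    rintro ⟨-, h⟩
    exact h ((hadj _ _).2 ⟨by simp, Or.inl trivial⟩)
  have hc : ∀ k : Fin n, (¬ (i = k ∨ i = k + 1)) → GV.c k ∈ s := by
    intro k hk
    rw [hmem]
    refine ⟨by simp, ?_⟩
    rw [hadj]
    rintro ⟨-, h | h⟩
    · simp [gammaRel] at h
    · have h' : i = k ∨ (i : ℕ) = ((k : ℕ) + 1) % n := by simpa [gammaRel] using h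
      rcases h' with h' | h'
      · exact hk (Or.inl h')
      · exact hk (Or.inr ((hCcond i k).1 h'))
  have hd1 : (i : ℕ) ≠ 0 → GV.d1 ∈ s := by
    intro h0
    rw [hmem]
    refine ⟨by simp, ?_⟩
    rw [hadj]
    rintro ⟨-, h | h⟩
    · exact h
    · exact h0 h
  have hd2 : (i : ℕ) = 0 → GV.d2 ∈ s := by
    intro h0
    rw [hmem]
    refine ⟨by simp, ?_⟩
    rw [hadj]
    rintro ⟨-, h | h⟩
    · exact h
    · exact h h0
  have hd1n : (i : ℕ) = 0 → GV.d1 ∉ s := by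
    intro h0 hm
    exact ((hmem _).1 hm).2 ((hadj _ _).2 ⟨by simp, Or.inr h0⟩)
  have hd2n : (i : ℕ) ≠ 0 → GV.d2 ∉ s := by
    intro h0 hm
    exact ((hmem _).1 hm).2 ((hadj _ _).2 ⟨by simp, Or.inr h0⟩)
  have hclosed : ∀ x y : ↥s, (SimpleGraph.induce s G).Adj x y →
      (x.1 = GV.a1 ∨ x.1 = GV.a2) → (y.1 = GV.a1 ∨ y.1 = GV.a2) := by
    rintro ⟨x, hx⟩ ⟨y, hy⟩ hxy hx1
    have h : G.Adj x y := hxy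
    rw [hadj] at h
    obtain ⟨-, h⟩ := h
    rcases hx1 with rfl | rfl <;> cases y <;>
      first
        | (left; rfl)
        | (right; rfl)
        | (exact absurd hy hb1)
        | (exact absurd hy hb2)
        | (exfalso; rcases h with h | h <;> simp [gammaRel] at h)
  have hconn : ∀ hub : GV n, (hub = GV.d1 ∨ hub = GV.d2) → ∀ hhub : hub ∈ s,
      ∀ x (hx : x ∈ s), x ≠ GV.a1 → x ≠ GV.a2 →
      (SimpleGraph.induce s G).Reachable ⟨x, hx⟩ ⟨hub, hhub⟩ := by
    intro hub hd hhub x hx hx1 hx2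
    have hcd : ∀ (k : Fin n) (hk : GV.c k ∈ s),
        (SimpleGraph.induce s G).Adj ⟨GV.c k, hk⟩ ⟨hub, hhub⟩ := by
      intro k hk
      apply hind
      rw [hadj]
      rcases hd with rfl | rfl
      · exact ⟨by simp, Or.inl trivial⟩
      · exact ⟨by simp, Or.inl trivial⟩
    cases x with
    | v j =>
      obtain ⟨hne, hnadj⟩ := (hmem _).1 hx
      have hji : i ≠ j := fun e => hne (by rw [e])
      by_cases hk1 : i = j + 1
      · have hadjk : G.Adj (GV.v j) (GV.c (j - 1)) := by
          rw [hadj]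
          refine ⟨by simp, Or.inr ?_⟩
          show j = j - 1 ∨ (j : ℕ) = (((j - 1 : Fin n) : ℕ) + 1) % n
          right
          rw [← hsucc, sub_add_cancel]
        have hks : GV.c (j - 1) ∈ s := by
          apply hc
          rintro (h' | h')
          · have he : j + 1 = j - 1 := by rw [← hk1, h']
            have e1 : j + 1 + 1 = j := by rw [he, sub_add_cancel]
            have e2 : (1 : Fin n) + 1 = 0 := by
              apply add_left_cancel (a := j)
              rw [← add_assoc, e1, add_zero]
            have e3 : ((0 : Fin n) : ℕ) = (1 + 1) % n := by
              rw [← e2, Fin.add_def, hval1]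
            rw [Fin.val_zero, Nat.mod_eq_of_lt (by omega)] at e3
            omega
          · rw [sub_add_cancel] at h'
            exact hji h'
        exact ((hind _ _ hx hks hadjk).reachable).trans ((hcd _ hks).reachable)
      · have hks : GV.c j ∈ s := by
          apply hc
          rintro (h' | h')
          · exact hji h'
          · exact hk1 h'
        have hadjk : G.Adj (GV.v j) (GV.c j) := by
          rw [hadj]
          exact ⟨by simp, Or.inr (Or.inl rfl)⟩
        exact ((hind _ _ hx hks hadjk).reachable).trans ((hcd _ hks).reachable)
    | a1 => exact absurd rfl hx1
    | a2 => exact absurd rfl hx2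
    | b1 => exact absurd hx hb1
    | b2 => exact absurd hx hb2
    | c j => exact (hcd j hx).reachable
    | d1 =>
      have h0 : (i : ℕ) ≠ 0 := fun h0 => (hd1n h0) hx
      rcases hd with rfl | rfl
      · exact SimpleGraph.Reachable.refl _
      · exact absurd hhub (hd2n h0)
    | d2 =>
      have h0 : (i : ℕ) = 0 := by
        by_contra h0
        exact (hd2n h0) hx
      rcases hd with rfl | rfl
      · exact absurd hhub (hd1n h0)
      · exact SimpleGraph.Reachable.refl _
  have hedge : (SimpleGraph.induce s G).Adj ⟨GV.a1, ha1⟩ ⟨GV.a2, ha2⟩ :=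
    hind _ _ _ _ ((hadj _ _).2 ⟨by simp, Or.inl trivial⟩)
  by_cases h0 : (i : ℕ) = 0
  · exact assemble ha1 ha2 (hd2 h0) hedge hclosed (by simp) (by simp)
      (hconn GV.d2 (Or.inr rfl) (hd2 h0))
  · exact assemble ha1 ha2 (hd1 h0) hedge hclosed (by simp) (by simp)
      (hconn GV.d1 (Or.inl rfl) (hd1 h0))
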